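/- Fix integers k ≥ 2 and s ≥ 2, a constant γ > 0, and a constant c with 0 < c ≤ (k−1)(1−1/s). For each n consider the random dataset model with common item probability p = γ/n and t = t(n) transactions, where t(n) = O(n^c). Let λ_n = E[Q̂_{k,s}] and let U_n be a Poisson random variable with mean λ_n. Then as n → ∞, sup_{A ⊆ ℕ} |Pr(Q̂_{k,s} ∈ A) − Pr(U_n ∈ A)| = O(1/n^{2s−2}). -/

import Mathlib

open MeasureTheory ProbabilityTheory Finset Filter Asymptotics
open scoped Classical ENNReal
set_option maxHeartbeats 1000000

noncomputable section

namespace PaperModel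

variable {Ω : Type*}

/-- Support of itemset `X` in the dataset given by the Bernoulli family `A`. -/
def support {n t : ℕ} (A : Fin t → Fin n → Ω → Bool) (X : Finset (Fin n)) (ω : Ω) : ℕ :=
  (Finset.univ.filter fun j => ∀ i ∈ X, A j i ω = true).card

/-- Indicator `Z_X` of the event that the support of `X` is at least `s`. -/
def Z {n t : ℕ} (A : Fin t → Fin n → Ω → Bool) (s : ℕ) (X : Finset (Fin n)) (ω : Ω) : ℝ :=
  if s ≤ support A X ω then 1 else 0

/-- `Q̂_{k,s}`: the number of `k`-itemsets with support at least `s`. -/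
def Qhat {n t : ℕ} (A : Fin t → Fin n → Ω → Bool) (k s : ℕ) (ω : Ω) : ℕ :=
  ((Finset.univ.powersetCard k).filter fun X => s ≤ support A X ω).card

/-- `p_X = Pr(Z_X = 1)`. -/
def pX [MeasurableSpace Ω] (μ : Measure Ω) {n t : ℕ} (A : Fin t → Fin n → Ω → Bool)
    (s : ℕ) (X : Finset (Fin n)) : ℝ :=
  (μ {ω | s ≤ support A X ω}).toReal

/-- `E[Z_X Z_Y] = Pr(Z_X = 1 ∧ Z_Y = 1)`. -/
def pXY [MeasurableSpace Ω] (μ : Measure Ω) {n t : ℕ} (A : Fin t → Fin n → Ω → Bool)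
    (s : ℕ) (X Y : Finset (Fin n)) : ℝ :=
  (μ ({ω | s ≤ support A X ω} ∩ {ω | s ≤ support A Y ω})).toReal

/-- `b_1(s) = Σ_{|X|=k} Σ_{Y ∈ I(X)} p_X p_Y`. -/
def b1 [MeasurableSpace Ω] (μ : Measure Ω) {n t : ℕ} (A : Fin t → Fin n → Ω → Bool)
    (k s : ℕ) : ℝ :=
  ∑ X ∈ Finset.univ.powersetCard k,
    ∑ Y ∈ (Finset.univ.powersetCard k).filter (fun Y => Y ∩ X ≠ ∅),
      pX μ A s X * pX μ A s Y

/-- `b_2(s) = Σ_{|X|=k} Σ_{X ≠ Y ∈ I(X)} E[Z_X Z_Y]`. -/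
def b2 [MeasurableSpace Ω] (μ : Measure Ω) {n t : ℕ} (A : Fin t → Fin n → Ω → Bool)
    (k s : ℕ) : ℝ :=
  ∑ X ∈ Finset.univ.powersetCard k,
    ∑ Y ∈ (Finset.univ.powersetCard k).filter (fun Y => Y ∩ X ≠ ∅ ∧ Y ≠ X),
      pXY μ A s X Y

/-- Probability that a Poisson random variable with mean `lam` lands in `S ⊆ ℕ`. -/
def poissonProb (lam : ℝ) (S : Set ℕ) : ℝ :=
  ∑' j : S, Real.exp (-lam) * lam ^ (j : ℕ) / (Nat.factorial (j : ℕ) : ℝ)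

section PoissonAux
variable {lam : ℝ}

lemma pois_summable (h : 0 ≤ lam) :
    Summable (fun j : ℕ => Real.exp (-lam) * lam ^ j / (Nat.factorial j : ℝ)) := by
  have := Real.summable_pow_div_factorial lam
  simpa [mul_div_assoc] using this.mul_left (Real.exp (-lam))

lemma pois_tsum (h : 0 ≤ lam) :
    ∑' j : ℕ, Real.exp (-lam) * lam ^ j / (Nat.factorial j : ℝ) = 1 := by
  have h1 : ∑' j : ℕ, lam ^ j / (Nat.factorial j : ℝ) = Real.exp lam := by
    rw [Real.exp_eq_exp_ℝ, NormedSpace.exp_eq_tsum_div]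
  calc ∑' j : ℕ, Real.exp (-lam) * lam ^ j / (Nat.factorial j : ℝ)
      = Real.exp (-lam) * ∑' j : ℕ, lam ^ j / (Nat.factorial j : ℝ) := by
        rw [← tsum_mul_left]; simp [mul_div_assoc]
    _ = 1 := by rw [h1, ← Real.exp_add]; simp

/-- decomposition of the Poisson probability of a set. -/
lemma poissonProb_decomp (h : 0 ≤ lam) (S : Set ℕ) :
    ∃ R : ℝ, 0 ≤ R ∧ R ≤ lam ^ 2 ∧
      poissonProb lam S = (if 0 ∈ S then Real.exp (-lam) else 0)
        + (if 1 ∈ S then Real.exp (-lam) * lam else 0) + R := by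
  set g : ℕ → ℝ := fun j => Real.exp (-lam) * lam ^ j / (Nat.factorial j : ℝ) with hg
  have hgs : Summable g := pois_summable h
  have hg0 : ∀ j, 0 ≤ g j := fun j => by
    have : (0:ℝ) ≤ lam ^ j := pow_nonneg h j
    positivity
  have hind : Summable (S.indicator g) := hgs.indicator S
  have h1 : poissonProb lam S = ∑' j : ℕ, S.indicator g j := by
    rw [poissonProb]; exact _root_.tsum_subtype S g
  have h2 : ∑' j : ℕ, S.indicator g j
      = S.indicator g 0 + (S.indicator g 1 + ∑' j : ℕ, S.indicator g (j + 2)) := by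
    rw [Summable.tsum_eq_zero_add hind, Summable.tsum_eq_zero_add ((summable_nat_add_iff 1).2 hind)]
  refine ⟨∑' j : ℕ, S.indicator g (j + 2), ?_, ?_, ?_⟩
  · exact tsum_nonneg fun j => Set.indicator_nonneg (fun i _ => hg0 i) _
  · have hle : ∀ j : ℕ, S.indicator g (j + 2) ≤ lam ^ 2 * g j := by
      intro j
      have hfac : (Nat.factorial j : ℝ) ≤ (Nat.factorial (j+2) : ℝ) := by
        exact_mod_cast Nat.factorial_le (by omega)
      have hjpos : (0:ℝ) < (Nat.factorial j : ℝ) := by positivity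
      have h2' : g (j + 2) ≤ lam ^ 2 * g j := by
        have : Real.exp (-lam) * lam ^ (j+2) / (Nat.factorial (j+2) : ℝ)
            ≤ Real.exp (-lam) * lam ^ (j+2) / (Nat.factorial j : ℝ) := by
          apply div_le_div_of_nonneg_left (by positivity) hjpos hfac
        refine this.trans (le_of_eq ?_)
        simp only [hg]; rw [pow_add]; field_simp
      calc S.indicator g (j + 2) ≤ g (j + 2) := Set.indicator_le_self' (fun i _ => hg0 i) _
        _ ≤ lam ^ 2 * g j := h2'
    calc ∑' j : ℕ, S.indicator g (j + 2) ≤ ∑' j : ℕ, lam ^ 2 * g j := by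
          refine Summable.tsum_le_tsum hle ((summable_nat_add_iff 2).2 hind) (hgs.mul_left _)
      _ = lam ^ 2 := by rw [tsum_mul_left, pois_tsum h, mul_one]
  · rw [h1, h2]
    have e0 : S.indicator g 0 = if 0 ∈ S then Real.exp (-lam) else 0 := by
      simp [Set.indicator, hg]
    have e1 : S.indicator g 1 = if 1 ∈ S then Real.exp (-lam) * lam else 0 := by
      simp [Set.indicator, hg]
    rw [e0, e1]; ring

end PoissonAux

lemma cast_mul_sub_nonneg (m : ℕ) : 0 ≤ (m : ℝ) * ((m : ℝ) - 1) := by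
  rcases m with _ | m
  · simp
  · have h1 : (1:ℝ) ≤ ((m+1 : ℕ) : ℝ) := by exact_mod_cast Nat.one_le_iff_ne_zero.2 (by omega)
    nlinarith

theorem abstract_bound {Ω : Type*} [MeasurableSpace Ω] (μ : Measure Ω) [IsProbabilityMeasure μ]
    (f : Ω → ℕ) (hf : Measurable f)
    (hint1 : Integrable (fun ω => (f ω : ℝ)) μ)
    (hint2 : Integrable (fun ω => (f ω : ℝ) * ((f ω : ℝ) - 1)) μ)
    (D : ℝ) (hD : ∫ ω, (f ω : ℝ) * ((f ω : ℝ) - 1) ∂μ = D)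
    (S : Set ℕ) :
    |(μ {ω | f ω ∈ S}).toReal - poissonProb (∫ ω, (f ω : ℝ) ∂μ) S|
      ≤ 4 * (D + (∫ ω, (f ω : ℝ) ∂μ) ^ 2) := by
  set lam := ∫ ω, (f ω : ℝ) ∂μ with hlam
  have hl0 : 0 ≤ lam := integral_nonneg fun ω => by positivity
  have hD0 : 0 ≤ D := by
    rw [← hD]; exact integral_nonneg fun ω => cast_mul_sub_nonneg _
  -- measurable sets
  have hm0 : MeasurableSet {ω | f ω = 0} := hf (measurableSet_singleton 0)
  have hm1' : MeasurableSet {ω | f ω = 1} := hf (measurableSet_singleton 1)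
  have hmge1 : MeasurableSet {ω | 1 ≤ f ω} := hf measurableSet_Ici
  have hmge2 : MeasurableSet {ω | 2 ≤ f ω} := hf measurableSet_Ici
  have hmS : MeasurableSet {ω | f ω ∈ S} := hf (MeasurableSet.of_discrete)
  have hmE2 : MeasurableSet {ω | f ω ∈ S ∧ 2 ≤ f ω} := by
    have : {ω | f ω ∈ S ∧ 2 ≤ f ω} = {ω | f ω ∈ S} ∩ {ω | 2 ≤ f ω} := rfl
    rw [this]; exact hmS.inter hmge2
  set P0 := (μ {ω | f ω = 0}).toReal
  set P1 := (μ {ω | f ω = 1}).toReal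
  set Pge1 := (μ {ω | 1 ≤ f ω}).toReal
  set Pge2 := (μ {ω | 2 ≤ f ω}).toReal
  -- indicator integral representations
  have hind1 : Pge1 = ∫ ω, Set.indicator {ω | 1 ≤ f ω} (1 : Ω → ℝ) ω ∂μ := by
    rw [integral_indicator_one hmge1]; rfl
  have hind2 : Pge2 = ∫ ω, Set.indicator {ω | 2 ≤ f ω} (1 : Ω → ℝ) ω ∂μ := by
    rw [integral_indicator_one hmge2]; rfl
  have hii1 : Integrable (Set.indicator {ω | 1 ≤ f ω} (1 : Ω → ℝ)) μ :=
    (integrable_const (1:ℝ)).indicator hmge1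
  have hii2 : Integrable (Set.indicator {ω | 2 ≤ f ω} (1 : Ω → ℝ)) μ :=
    (integrable_const (1:ℝ)).indicator hmge2
  -- (a) 0 ≤ lam - Pge1 ≤ D
  have ha : 0 ≤ lam - Pge1 ∧ lam - Pge1 ≤ D := by
    have hsub : lam - Pge1
        = ∫ ω, ((f ω : ℝ) - Set.indicator {ω | 1 ≤ f ω} (1 : Ω → ℝ) ω) ∂μ := by
      rw [hlam, hind1, ← integral_sub hint1 hii1]
    constructor
    · rw [hsub]
      refine integral_nonneg fun ω => ?_
      simp only [Pi.zero_apply, Set.indicator_apply, Set.mem_setOf_eq, Pi.one_apply]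
      by_cases h : 1 ≤ f ω
      · have : (1:ℝ) ≤ (f ω : ℝ) := by exact_mod_cast h
        rw [if_pos h]; linarith
      · rw [if_neg h]
        have : f ω = 0 := by omega
        simp [this]
    · rw [hsub, ← hD]
      refine integral_mono (hint1.sub hii1) hint2 fun ω => ?_
      simp only [Set.indicator_apply, Set.mem_setOf_eq, Pi.one_apply]
      by_cases h : 1 ≤ f ω
      · have h1 : (1:ℝ) ≤ (f ω : ℝ) := by exact_mod_cast h
        rw [if_pos h]; nlinarith
      · rw [if_neg h]
        have : f ω = 0 := by omega
        simp [this]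
  -- (b) Pge2 ≤ D
  have hb : Pge2 ≤ D := by
    rw [hind2, ← hD]
    refine integral_mono hii2 hint2 fun ω => ?_
    simp only [Set.indicator_apply, Set.mem_setOf_eq, Pi.one_apply]
    by_cases h : 2 ≤ f ω
    · have h2 : (2:ℝ) ≤ (f ω : ℝ) := by exact_mod_cast h
      rw [if_pos h]; nlinarith
    · rw [if_neg h]
      exact cast_mul_sub_nonneg _
  have hPge2nn : 0 ≤ Pge2 := ENNReal.toReal_nonneg
  -- (c) P0 = 1 - Pge1
  have hc : P0 = 1 - Pge1 := by
    have hdis : Disjoint {ω | f ω = 0} {ω | 1 ≤ f ω} := by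
      rw [Set.disjoint_iff_inter_eq_empty]
      ext ω; simp only [Set.mem_inter_iff, Set.mem_setOf_eq, Set.mem_empty_iff_false, iff_false]
      omega
    have huniv : {ω | f ω = 0} ∪ {ω | 1 ≤ f ω} = Set.univ := by
      ext ω; simp only [Set.mem_union, Set.mem_setOf_eq, Set.mem_univ, iff_true]; omega
    have : μ ({ω | f ω = 0} ∪ {ω | 1 ≤ f ω}) = μ {ω | f ω = 0} + μ {ω | 1 ≤ f ω} := measure_union hdis hmge1
    rw [huniv, measure_univ] at this
    have := congrArg ENNReal.toReal this
    rw [ENNReal.toReal_add (measure_ne_top μ _) (measure_ne_top μ _)] at this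
    simp only [ENNReal.toReal_one] at this
    simp only [P0, Pge1]
    linarith
  -- (d) P1 = Pge1 - Pge2
  have hd : P1 = Pge1 - Pge2 := by
    have hdis : Disjoint {ω | f ω = 1} {ω | 2 ≤ f ω} := by
      rw [Set.disjoint_iff_inter_eq_empty]
      ext ω; simp only [Set.mem_inter_iff, Set.mem_setOf_eq, Set.mem_empty_iff_false, iff_false]
      omega
    have huniv : {ω | f ω = 1} ∪ {ω | 2 ≤ f ω} = {ω | 1 ≤ f ω} := by
      ext ω; simp only [Set.mem_union, Set.mem_setOf_eq]; omega
    have : μ ({ω | f ω = 1} ∪ {ω | 2 ≤ f ω}) = μ {ω | f ω = 1} + μ {ω | 2 ≤ f ω} := measure_union hdis hmge2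
    rw [huniv] at this
    have := congrArg ENNReal.toReal this
    rw [ENNReal.toReal_add (measure_ne_top μ _) (measure_ne_top μ _)] at this
    simp only [P1, Pge1, Pge2]
    linarith
  -- (e) split of μ {f ∈ S}
  have he : (μ {ω | f ω ∈ S}).toReal
      = (if 0 ∈ S then P0 else 0) + (if 1 ∈ S then P1 else 0)
        + (μ {ω | f ω ∈ S ∧ 2 ≤ f ω}).toReal := by
    have hset : {ω | f ω ∈ S}
        = ((if 0 ∈ S then {ω | f ω = 0} else ∅) ∪ (if 1 ∈ S then {ω | f ω = 1} else ∅))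
          ∪ {ω | f ω ∈ S ∧ 2 ≤ f ω} := by
      ext ω
      by_cases h0 : 0 ∈ S <;> by_cases h1 : 1 ∈ S <;>
        simp only [h0, h1, if_true, if_false, Set.mem_union, Set.mem_setOf_eq,
          Set.mem_empty_iff_false, false_or, or_false, Set.union_empty, Set.empty_union] <;>
        constructor <;> intro hw
      · rcases Nat.lt_or_ge (f ω) 2 with h | h
        · interval_cases h' : (f ω) <;> simp_all
        · right; exact ⟨hw, h⟩
      · rcases hw with (h | h) | ⟨h, _⟩
        · rw [h]; exact h0
        · rw [h]; exact h1
        · exact h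
      · rcases Nat.lt_or_ge (f ω) 2 with h | h
        · interval_cases h' : (f ω) <;> simp_all
        · right; exact ⟨hw, h⟩
      · rcases hw with h | ⟨h, _⟩
        · rw [h]; exact h0
        · exact h
      · rcases Nat.lt_or_ge (f ω) 2 with h | h
        · interval_cases h' : (f ω) <;> simp_all
        · right; exact ⟨hw, h⟩
      · rcases hw with h | ⟨h, _⟩
        · rw [h]; exact h1
        · exact h
      · rcases Nat.lt_or_ge (f ω) 2 with h | h
        · interval_cases h' : (f ω) <;> simp_all
        · exact ⟨hw, h⟩
      · exact hw.1
    set A0 : Set Ω := if 0 ∈ S then {ω | f ω = 0} else ∅ with hA0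
    set A1 : Set Ω := if 1 ∈ S then {ω | f ω = 1} else ∅ with hA1
    have hmA0 : MeasurableSet A0 := by rw [hA0]; split_ifs; exacts [hm0, MeasurableSet.empty]
    have hmA1 : MeasurableSet A1 := by rw [hA1]; split_ifs; exacts [hm1', MeasurableSet.empty]
    have hsub0 : A0 ⊆ {ω | f ω = 0} := by rw [hA0]; split_ifs; exacts [subset_rfl, Set.empty_subset _]
    have hsub1 : A1 ⊆ {ω | f ω = 1} := by rw [hA1]; split_ifs; exacts [subset_rfl, Set.empty_subset _]
    have hdis01 : Disjoint A0 A1 := by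
      refine Set.disjoint_left.2 fun ω h0 h1 => ?_
      have := hsub0 h0; have := hsub1 h1
      simp only [Set.mem_setOf_eq] at *; omega
    have hdis2 : Disjoint (A0 ∪ A1) {ω | f ω ∈ S ∧ 2 ≤ f ω} := by
      refine Set.disjoint_left.2 fun ω h0 h1 => ?_
      rcases h0 with h0 | h0
      · have := hsub0 h0; simp only [Set.mem_setOf_eq] at *; omega
      · have := hsub1 h0; simp only [Set.mem_setOf_eq] at *; omega
    have hmu : μ {ω | f ω ∈ S} = μ A0 + μ A1 + μ {ω | f ω ∈ S ∧ 2 ≤ f ω} := by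
      rw [hset, measure_union hdis2 hmE2, measure_union hdis01 hmA1]
    rw [hmu, ENNReal.toReal_add (by finiteness) (by finiteness),
      ENNReal.toReal_add (by finiteness) (by finiteness)]
    congr 1
    congr 1
    · rw [hA0]; split_ifs; exacts [rfl, by simp]
    · rw [hA1]; split_ifs; exacts [rfl, by simp]
  -- Poisson decomposition and exponential bounds
  obtain ⟨R, hR0, hRle, hdecomp⟩ := poissonProb_decomp hl0 S
  have e1 : 1 - lam ≤ Real.exp (-lam) := by
    have := Real.add_one_le_exp (-lam); linarith
  have e2 : Real.exp (-lam) ≤ 1 - lam + lam ^ 2 := by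
    have h1l : 1 + lam ≤ Real.exp lam := by
      have := Real.add_one_le_exp lam; linarith
    have hpos : (0:ℝ) < 1 + lam := by linarith
    have hexppos : (0:ℝ) < Real.exp lam := Real.exp_pos lam
    have hle : Real.exp (-lam) ≤ 1 / (1 + lam) := by
      rw [Real.exp_neg]
      rw [inv_eq_one_div]
      apply div_le_div_of_nonneg_left one_pos.le hpos h1l
    refine hle.trans ?_
    rw [div_le_iff₀ hpos]; nlinarith
  have e3 : Real.exp (-lam) ≤ 1 := by
    rw [← Real.exp_zero]
    exact Real.exp_le_exp.2 (by linarith)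
  have hexpnn : 0 ≤ Real.exp (-lam) := (Real.exp_pos _).le
  -- key per-point bounds
  have hP0 : |P0 - Real.exp (-lam)| ≤ D + lam ^ 2 := by
    rw [hc, abs_le]; constructor <;> linarith [ha.1, ha.2, e1, e2]
  have hel : Real.exp (-lam) * lam ≤ lam := by nlinarith
  have hel0 : 0 ≤ Real.exp (-lam) * lam := mul_nonneg hexpnn hl0
  have hg1 : lam - Real.exp (-lam) * lam ≤ lam ^ 2 := by nlinarith
  have hP1 : |P1 - Real.exp (-lam) * lam| ≤ 2 * D + lam ^ 2 := by
    rw [hd, abs_le]; constructor <;> linarith [ha.1, ha.2, hb, hPge2nn]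
  have haR : |(μ {ω | f ω ∈ S ∧ 2 ≤ f ω}).toReal - R| ≤ D + lam ^ 2 := by
    have h1 : (μ {ω | f ω ∈ S ∧ 2 ≤ f ω}).toReal ≤ Pge2 := by
      apply ENNReal.toReal_mono (measure_ne_top μ _)
      exact measure_mono fun ω hω => hω.2
    have h2 : 0 ≤ (μ {ω | f ω ∈ S ∧ 2 ≤ f ω}).toReal := ENNReal.toReal_nonneg
    rw [abs_le]; constructor <;> linarith
  rw [he, hdecomp]
  have key : ∀ x y u v a b : ℝ, |x - u| ≤ D + lam^2 → |y - v| ≤ 2*D + lam^2 → |a - b| ≤ D + lam^2 →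
      |(if 0 ∈ S then x else 0) + (if 1 ∈ S then y else 0) + a
        - ((if 0 ∈ S then u else 0) + (if 1 ∈ S then v else 0) + b)| ≤ 4 * (D + lam^2) := by
    intro x y u v a b hx hy hab
    have t1 : |(if 0 ∈ S then x else 0) - (if 0 ∈ S then u else 0)| ≤ D + lam^2 := by
      split_ifs; exacts [hx, by simp only [sub_self, abs_zero]; nlinarith [sq_nonneg lam]]
    have t2 : |(if 1 ∈ S then y else 0) - (if 1 ∈ S then v else 0)| ≤ 2*D + lam^2 := by
      split_ifs; exacts [hy, by simp only [sub_self, abs_zero]; nlinarith [sq_nonneg lam]]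
    calc |(if 0 ∈ S then x else 0) + (if 1 ∈ S then y else 0) + a
        - ((if 0 ∈ S then u else 0) + (if 1 ∈ S then v else 0) + b)|
        ≤ |(if 0 ∈ S then x else 0) - (if 0 ∈ S then u else 0)|
          + |(if 1 ∈ S then y else 0) - (if 1 ∈ S then v else 0)| + |a - b| := by
          have : (if 0 ∈ S then x else 0) + (if 1 ∈ S then y else 0) + a
              - ((if 0 ∈ S then u else 0) + (if 1 ∈ S then v else 0) + b)
              = ((if 0 ∈ S then x else 0) - (if 0 ∈ S then u else 0))
                + ((if 1 ∈ S then y else 0) - (if 1 ∈ S then v else 0)) + (a - b) := by ring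
          rw [this]
          exact (abs_add_le _ _).trans (by gcongr; exact abs_add_le _ _)
      _ ≤ 4 * (D + lam^2) := by nlinarith
  exact key _ _ _ _ _ _ hP0 hP1 haR


section FixedN

variable [MeasurableSpace Ω] (μ : Measure Ω) [IsProbabilityMeasure μ]
variable {n t : ℕ} (A : Fin t → Fin n → Ω → Bool) (k s : ℕ)
variable (hmeas : ∀ j i, Measurable (A j i))
include hmeas

lemma measSet_one (j : Fin t) (i : Fin n) : MeasurableSet {ω | A j i ω = true} := by
  have : {ω | A j i ω = true} = (A j i) ⁻¹' {true} := by ext ω; simp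
  rw [this]; exact hmeas j i (measurableSet_singleton true)

lemma measSet_tr (j : Fin t) (X : Finset (Fin n)) :
    MeasurableSet {ω | ∀ i ∈ X, A j i ω = true} := by
  have : {ω | ∀ i ∈ X, A j i ω = true} = ⋂ i ∈ X, {ω | A j i ω = true} := by
    ext ω; simp
  rw [this]
  exact MeasurableSet.biInter (X : Set (Fin n)).to_countable
    fun i _ => measSet_one A hmeas j i

lemma measurable_support (X : Finset (Fin n)) : Measurable (support A X) := by
  have h : support A X = fun ω => ∑ j : Fin t, if (∀ i ∈ X, A j i ω = true) then 1 else 0 := by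
    funext ω; rw [support, Finset.card_filter]
  rw [h]
  exact Finset.measurable_sum _ fun j _ =>
    Measurable.ite (measSet_tr A hmeas j X) measurable_const measurable_const

lemma measSet_E (X : Finset (Fin n)) : MeasurableSet {ω | s ≤ support A X ω} :=
  measurable_support A hmeas X measurableSet_Ici

lemma measurable_Qhat : Measurable (Qhat A k s) := by
  have h : Qhat A k s = fun ω => ∑ X ∈ Finset.univ.powersetCard k,
      if s ≤ support A X ω then 1 else 0 := by
    funext ω; rw [Qhat, Finset.card_filter]
  rw [h]
  exact Finset.measurable_sum _ fun X _ =>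
    Measurable.ite (measSet_E A s hmeas X) measurable_const measurable_const

omit hmeas in
/-- indicator of the event `E X`. -/
def indZ (A : Fin t → Fin n → Ω → Bool) (s : ℕ) (X : Finset (Fin n)) : Ω → ℝ :=
  Set.indicator {ω | s ≤ support A X ω} (fun _ => (1:ℝ))

omit hmeas in
lemma Qhat_cast (ω : Ω) :
    (Qhat A k s ω : ℝ) = ∑ X ∈ Finset.univ.powersetCard k, indZ A s X ω := by
  rw [Qhat, Finset.card_filter]
  push_cast
  refine Finset.sum_congr rfl fun X _ => ?_
  simp [indZ, Set.indicator_apply]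

lemma integrable_indZ (X : Finset (Fin n)) : Integrable (indZ A s X) μ :=
  (integrable_const (1:ℝ)).indicator (measSet_E A s hmeas X)

lemma integral_indZ (X : Finset (Fin n)) : ∫ ω, indZ A s X ω ∂μ = pX μ A s X := by
  rw [indZ, pX]
  have : Set.indicator {ω | s ≤ support A X ω} (fun _ => (1:ℝ))
      = Set.indicator {ω | s ≤ support A X ω} (1 : Ω → ℝ) := rfl
  rw [this, integral_indicator_one (measSet_E A s hmeas X)]; rfl

omit hmeas in
lemma indZ_mul (X Y : Finset (Fin n)) (ω : Ω) :
    indZ A s X ω * indZ A s Y ω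
      = Set.indicator ({ω | s ≤ support A X ω} ∩ {ω | s ≤ support A Y ω}) (fun _ => (1:ℝ)) ω := by
  simp only [indZ, Set.indicator_apply, Set.mem_inter_iff]
  by_cases h1 : ω ∈ {ω | s ≤ support A X ω} <;> by_cases h2 : ω ∈ {ω | s ≤ support A Y ω} <;>
    simp [h1, h2]

lemma integrable_indZ_mul (X Y : Finset (Fin n)) :
    Integrable (fun ω => indZ A s X ω * indZ A s Y ω) μ := by
  have : (fun ω => indZ A s X ω * indZ A s Y ω)
      = Set.indicator ({ω | s ≤ support A X ω} ∩ {ω | s ≤ support A Y ω}) (fun _ => (1:ℝ)) := by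
    funext ω; exact indZ_mul A s X Y ω
  rw [this]
  exact (integrable_const (1:ℝ)).indicator ((measSet_E A s hmeas X).inter (measSet_E A s hmeas Y))

lemma integral_indZ_mul (X Y : Finset (Fin n)) :
    ∫ ω, indZ A s X ω * indZ A s Y ω ∂μ = pXY μ A s X Y := by
  have h : (fun ω => indZ A s X ω * indZ A s Y ω)
      = Set.indicator ({ω | s ≤ support A X ω} ∩ {ω | s ≤ support A Y ω}) (1 : Ω → ℝ) := by
    funext ω; exact indZ_mul A s X Y ω
  rw [h, integral_indicator_one ((measSet_E A s hmeas X).inter (measSet_E A s hmeas Y)), pXY]; rfl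

lemma integrable_Qcast : Integrable (fun ω => (Qhat A k s ω : ℝ)) μ := by
  have h : (fun ω => (Qhat A k s ω : ℝ))
      = fun ω => ∑ X ∈ Finset.univ.powersetCard k, indZ A s X ω := by
    funext ω; exact Qhat_cast A k s ω
  rw [h]
  exact integrable_finset_sum _ fun X _ => integrable_indZ μ A s hmeas X

lemma lam_eq : ∫ ω, (Qhat A k s ω : ℝ) ∂μ = ∑ X ∈ Finset.univ.powersetCard k, pX μ A s X := by
  have h : (fun ω => (Qhat A k s ω : ℝ))
      = fun ω => ∑ X ∈ Finset.univ.powersetCard k, indZ A s X ω := by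
    funext ω; exact Qhat_cast A k s ω
  rw [h, integral_finset_sum _ fun X _ => integrable_indZ μ A s hmeas X]
  exact Finset.sum_congr rfl fun X _ => integral_indZ μ A s hmeas X

omit hmeas in
lemma Qmul_pointwise (ω : Ω) :
    (Qhat A k s ω : ℝ) * ((Qhat A k s ω : ℝ) - 1)
      = ∑ X ∈ Finset.univ.powersetCard k, ∑ Y ∈ (Finset.univ.powersetCard k).erase X,
          indZ A s X ω * indZ A s Y ω := by
  set K := (Finset.univ : Finset (Fin n)).powersetCard k with hK
  have hsq : (Qhat A k s ω : ℝ) * (Qhat A k s ω : ℝ)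
      = ∑ X ∈ K, ∑ Y ∈ K, indZ A s X ω * indZ A s Y ω := by
    rw [Qhat_cast A k s ω, Finset.sum_mul_sum]
  have hid : ∀ X, indZ A s X ω * indZ A s X ω = indZ A s X ω := by
    intro X
    simp only [indZ, Set.indicator_apply]
    by_cases h : ω ∈ {ω | s ≤ support A X ω} <;> simp [h]
  have hsplit : ∀ X ∈ K, ∑ Y ∈ K, indZ A s X ω * indZ A s Y ω
      = indZ A s X ω + ∑ Y ∈ K.erase X, indZ A s X ω * indZ A s Y ω := by
    intro X hX
    rw [← Finset.add_sum_erase K _ hX, hid]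
  rw [mul_sub, mul_one, hsq, Finset.sum_congr rfl hsplit, Finset.sum_add_distrib,
    ← Qhat_cast A k s ω]
  ring

lemma integrable_Qmul :
    Integrable (fun ω => (Qhat A k s ω : ℝ) * ((Qhat A k s ω : ℝ) - 1)) μ := by
  have h : (fun ω => (Qhat A k s ω : ℝ) * ((Qhat A k s ω : ℝ) - 1))
      = fun ω => ∑ X ∈ Finset.univ.powersetCard k, ∑ Y ∈ (Finset.univ.powersetCard k).erase X,
          indZ A s X ω * indZ A s Y ω := by
    funext ω; exact Qmul_pointwise A k s ω
  rw [h]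
  exact integrable_finset_sum _ fun X _ => integrable_finset_sum _ fun Y _ =>
    integrable_indZ_mul μ A s hmeas X Y

lemma moment2_eq :
    ∫ ω, (Qhat A k s ω : ℝ) * ((Qhat A k s ω : ℝ) - 1) ∂μ
      = ∑ X ∈ Finset.univ.powersetCard k, ∑ Y ∈ (Finset.univ.powersetCard k).erase X,
          pXY μ A s X Y := by
  have h : (fun ω => (Qhat A k s ω : ℝ) * ((Qhat A k s ω : ℝ) - 1))
      = fun ω => ∑ X ∈ Finset.univ.powersetCard k, ∑ Y ∈ (Finset.univ.powersetCard k).erase X,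
          indZ A s X ω * indZ A s Y ω := by
    funext ω; exact Qmul_pointwise A k s ω
  rw [h, integral_finset_sum _ fun X _ => integrable_finset_sum _ fun Y _ =>
    integrable_indZ_mul μ A s hmeas X Y]
  refine Finset.sum_congr rfl fun X _ => ?_
  rw [integral_finset_sum _ fun Y _ => integrable_indZ_mul μ A s hmeas X Y]
  exact Finset.sum_congr rfl fun Y _ => integral_indZ_mul μ A s hmeas X Y


end FixedN

/-- Abstract counting lemma: sum over `s`-subsets of a weight depending on the part
outside a fixed `s`-set `S₁`. -/
lemma sum_pow_sdiff_le {α : Type*} [Fintype α] [DecidableEq α] (s : ℕ) (S₁ : Finset α)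
    (hS₁ : S₁.card = s) {y : ℝ} (hy : 0 ≤ y) :
    ∑ S₂ ∈ (Finset.univ : Finset α).powersetCard s, y ^ (S₂ \ S₁).card
      ≤ (1 + (Fintype.card α : ℝ) * y) ^ s := by
  have hmap : ∀ S₂ ∈ (Finset.univ : Finset α).powersetCard s, (S₂ \ S₁).card ∈ range (s+1) := by
    intro S₂ hS₂
    rw [Finset.mem_powersetCard_univ] at hS₂
    rw [Finset.mem_range]
    have h1 : (S₂ \ S₁).card ≤ S₂.card := Finset.card_le_card (Finset.sdiff_subset)
    omega
  rw [← Finset.sum_fiberwise_of_maps_to hmap]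
  have hfiber : ∀ d ∈ range (s+1),
      ∑ S₂ ∈ ((Finset.univ : Finset α).powersetCard s).filter (fun S₂ => (S₂ \ S₁).card = d),
        y ^ (S₂ \ S₁).card
      ≤ (s.choose d : ℝ) * (Fintype.card α : ℝ) ^ d * y ^ d := by
    intro d hd
    rw [Finset.mem_range] at hd
    have heq : ∀ S₂ ∈ ((Finset.univ : Finset α).powersetCard s).filter
        (fun S₂ => (S₂ \ S₁).card = d), y ^ (S₂ \ S₁).card = y ^ d := by
      intro S₂ hS₂
      rw [Finset.mem_filter] at hS₂
      rw [hS₂.2]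
    rw [Finset.sum_congr rfl heq, Finset.sum_const, nsmul_eq_mul]
    have hcard : (((Finset.univ : Finset α).powersetCard s).filter
        (fun S₂ => (S₂ \ S₁).card = d)).card ≤ s.choose d * (Fintype.card α) ^ d := by
      have hinj : (((Finset.univ : Finset α).powersetCard s).filter
          (fun S₂ => (S₂ \ S₁).card = d)).card
          ≤ (S₁.powersetCard (s - d) ×ˢ (Finset.univ : Finset α).powersetCard d).card := by
        apply Finset.card_le_card_of_injOn (fun S₂ => (S₂ ∩ S₁, S₂ \ S₁))
        · intro S₂ hS₂
          rw [Finset.mem_coe, Finset.mem_filter, Finset.mem_powersetCard_univ] at hS₂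
          rw [Finset.mem_coe, Finset.mem_product, Finset.mem_powersetCard, Finset.mem_powersetCard_univ]
          refine ⟨⟨Finset.inter_subset_right, ?_⟩, hS₂.2⟩
          have h1 := hS₂.1
          have h2 := hS₂.2
          have h3 := Finset.card_sdiff_add_card_inter S₂ S₁
          dsimp only
          omega
        · intro S₂ hS₂ S₂' hS₂' hpair
          simp only [Prod.mk.injEq] at hpair
          have h2 : S₂ \ S₁ ∪ S₂ ∩ S₁ = S₂ := Finset.sdiff_union_inter S₂ S₁
          have h2' : S₂' \ S₁ ∪ S₂' ∩ S₁ = S₂' := Finset.sdiff_union_inter S₂' S₁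
          rw [← h2, ← h2', hpair.1, hpair.2]
      rw [Finset.card_product, Finset.card_powersetCard, Finset.card_powersetCard,
        hS₁, Finset.card_univ] at hinj
      calc (((Finset.univ : Finset α).powersetCard s).filter
          (fun S₂ => (S₂ \ S₁).card = d)).card
          ≤ s.choose (s - d) * (Fintype.card α).choose d := hinj
        _ ≤ s.choose d * (Fintype.card α) ^ d := by
            rw [Nat.choose_symm (by omega : d ≤ s)]
            exact Nat.mul_le_mul_left _ (Nat.choose_le_pow _ _)
    calc (((Finset.univ : Finset α).powersetCard s).filter
        (fun S₂ => (S₂ \ S₁).card = d)).card * y ^ d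
        ≤ ((s.choose d * (Fintype.card α) ^ d : ℕ) : ℝ) * y ^ d :=
          mul_le_mul_of_nonneg_right (by exact_mod_cast hcard) (pow_nonneg hy d)
      _ = (s.choose d : ℝ) * (Fintype.card α : ℝ) ^ d * y ^ d := by push_cast; ring
  calc ∑ d ∈ range (s+1), ∑ S₂ ∈ ((Finset.univ : Finset α).powersetCard s).filter
        (fun S₂ => (S₂ \ S₁).card = d), y ^ (S₂ \ S₁).card
      ≤ ∑ d ∈ range (s+1), (s.choose d : ℝ) * (Fintype.card α : ℝ) ^ d * y ^ d :=
        Finset.sum_le_sum hfiber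
    _ = (1 + (Fintype.card α : ℝ) * y) ^ s := by
        rw [add_comm (1:ℝ), add_pow]
        refine Finset.sum_congr rfl fun d hd => ?_
        rw [mul_pow, one_pow]
        ring


section Indep

variable [MeasurableSpace Ω] (μ : Measure Ω) [IsProbabilityMeasure μ]
variable {n t : ℕ} (A : Fin t → Fin n → Ω → Bool) (k s : ℕ) (q : ℝ)
variable (hindep : iIndepFun
    (fun p : Fin t × Fin n => A p.1 p.2) μ)
variable (hp : ∀ j i, μ {ω | A j i ω = true} = ENNReal.ofReal q)

include hindep hp in
lemma meas_inter (T : Finset (Fin t × Fin n)) :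
    μ (⋂ c ∈ T, {ω | A c.1 c.2 ω = true}) = ENNReal.ofReal q ^ T.card := by
  have hpre : ∀ c : Fin t × Fin n,
      (fun p : Fin t × Fin n => A p.1 p.2) c ⁻¹' ({true} : Set Bool)
        = {ω | A c.1 c.2 ω = true} := by
    intro c; ext ω; simp
  have h := hindep.measure_inter_preimage_eq_mul T
    (sets := fun _ => ({true} : Set Bool)) (fun c _ => measurableSet_singleton true)
  simp only [hpre] at h
  rw [h]
  rw [Finset.prod_congr rfl fun c _ => hp c.1 c.2, Finset.prod_const]

include hindep hp in
lemma mu_E_le (hq0 : 0 ≤ q) (X : Finset (Fin n)) (hX : X.card = k) :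
    pX μ A s X ≤ (t:ℝ)^s * q^(s*k) := by
  classical
  set pcs := (Finset.univ : Finset (Fin t)).powersetCard s with hpcs
  have hsub : {ω | s ≤ support A X ω}
      ⊆ ⋃ S ∈ pcs, ⋂ c ∈ S ×ˢ X, {ω | A c.1 c.2 ω = true} := by
    intro ω hω
    obtain ⟨S, hSsub, hScard⟩ := Finset.exists_subset_card_eq hω
    refine Set.mem_biUnion (Finset.mem_powersetCard_univ.2 hScard) ?_
    simp only [Set.mem_iInter]
    intro c hc
    rw [Finset.mem_product] at hc
    have := (Finset.mem_filter.1 (hSsub hc.1)).2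
    exact this c.2 hc.2
  have hEN : μ {ω | s ≤ support A X ω}
      ≤ ∑ S ∈ pcs, ENNReal.ofReal q ^ ((S ×ˢ X).card) := by
    refine (measure_mono hsub).trans ?_
    refine (measure_biUnion_finset_le pcs _).trans ?_
    exact Finset.sum_le_sum fun S _ => le_of_eq (meas_inter μ A q hindep hp _)
  have hcard : ∀ S ∈ pcs, (S ×ˢ X).card = s * k := by
    intro S hS
    rw [Finset.card_product, Finset.mem_powersetCard_univ.1 hS, hX]
  rw [Finset.sum_congr rfl fun S hS => by rw [hcard S hS]] at hEN
  rw [Finset.sum_const, Finset.card_powersetCard, Finset.card_univ, Fintype.card_fin] at hEN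
  have hne : (t.choose s : ℝ≥0∞) * ENNReal.ofReal q ^ (s*k) ≠ ⊤ := by
    exact ENNReal.mul_ne_top (ENNReal.natCast_ne_top _) (ENNReal.pow_ne_top ENNReal.ofReal_ne_top)
  calc pX μ A s X ≤ ((t.choose s : ℝ≥0∞) * ENNReal.ofReal q ^ (s*k)).toReal := by
        rw [pX]
        apply ENNReal.toReal_mono hne
        simpa [nsmul_eq_mul] using hEN
    _ = (t.choose s : ℝ) * q^(s*k) := by
        simp [ENNReal.toReal_mul, ENNReal.toReal_pow, ENNReal.toReal_ofReal hq0]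
    _ ≤ (t:ℝ)^s * q^(s*k) := by
        have h1 : (t.choose s : ℝ) ≤ (t:ℝ)^s := by exact_mod_cast Nat.choose_le_pow t s
        have h2 : 0 ≤ q^(s*k) := pow_nonneg hq0 _
        exact mul_le_mul_of_nonneg_right h1 h2

include hindep hp in
lemma mu_EE_le (hq0 : 0 ≤ q) (hq1 : q ≤ 1) (X Y : Finset (Fin n))
    (hX : X.card = k) (hY : Y.card = k) :
    pXY μ A s X Y
      ≤ (t:ℝ)^s * q^((2*k - (X ∩ Y).card)*s) * (1 + (t:ℝ) * q^((X ∩ Y).card))^s := by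
  classical
  set m := (X ∩ Y).card with hm
  have hmk : m ≤ k := by
    rw [hm, ← hX]; exact Finset.card_le_card Finset.inter_subset_left
  set pcs := (Finset.univ : Finset (Fin t)).powersetCard s with hpcs
  set G : Finset (Fin t) → Finset (Fin t) → Set Ω := fun S₁ S₂ =>
    ⋂ c ∈ (S₁ ×ˢ X ∪ S₂ ×ˢ Y), {ω | A c.1 c.2 ω = true} with hG
  have hsub : {ω | s ≤ support A X ω} ∩ {ω | s ≤ support A Y ω}
      ⊆ ⋃ S₁ ∈ pcs, ⋃ S₂ ∈ pcs, G S₁ S₂ := by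
    rintro ω ⟨hω1, hω2⟩
    obtain ⟨S₁, hS₁sub, hS₁card⟩ := Finset.exists_subset_card_eq hω1
    obtain ⟨S₂, hS₂sub, hS₂card⟩ := Finset.exists_subset_card_eq hω2
    refine Set.mem_biUnion (Finset.mem_powersetCard_univ.2 hS₁card) ?_
    refine Set.mem_biUnion (Finset.mem_powersetCard_univ.2 hS₂card) ?_
    simp only [hG, Set.mem_iInter]
    intro c hc
    rw [Finset.mem_union] at hc
    rcases hc with hc | hc
    · rw [Finset.mem_product] at hc
      exact (Finset.mem_filter.1 (hS₁sub hc.1)).2 c.2 hc.2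
    · rw [Finset.mem_product] at hc
      exact (Finset.mem_filter.1 (hS₂sub hc.1)).2 c.2 hc.2
  -- cardinality identity
  have hcard : ∀ S₁ ∈ pcs, ∀ S₂ ∈ pcs,
      (S₁ ×ˢ X ∪ S₂ ×ˢ Y).card = (2*k - m)*s + (S₂ \ S₁).card * m := by
    intro S₁ hS₁ S₂ hS₂
    have hS₁c : S₁.card = s := Finset.mem_powersetCard_univ.1 hS₁
    have hS₂c : S₂.card = s := Finset.mem_powersetCard_univ.1 hS₂
    have hint : (S₁ ×ˢ X) ∩ (S₂ ×ˢ Y) = (S₁ ∩ S₂) ×ˢ (X ∩ Y) := by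
      ext c
      simp only [Finset.mem_inter, Finset.mem_product]
      tauto
    have hU := Finset.card_union_add_card_inter (S₁ ×ˢ X) (S₂ ×ˢ Y)
    rw [hint, Finset.card_product, Finset.card_product, Finset.card_product,
      hS₁c, hS₂c, hX, hY, ← hm] at hU
    have hd : (S₂ \ S₁).card + (S₂ ∩ S₁).card = s := by
      rw [Finset.card_sdiff_add_card_inter, hS₂c]
    have hrc : (S₂ ∩ S₁).card = (S₁ ∩ S₂).card := by rw [Finset.inter_comm]
    have hrs : (S₁ ∩ S₂).card ≤ s := by
      rw [← hS₁c]; exact Finset.card_le_card Finset.inter_subset_left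
    have hm2k : m ≤ 2*k := by omega
    have hd' : ((S₂ \ S₁).card : ℤ) + ((S₂ ∩ S₁).card : ℤ) = (s : ℤ) := by exact_mod_cast hd
    have hrc' : ((S₂ ∩ S₁).card : ℤ) = ((S₁ ∩ S₂).card : ℤ) := by exact_mod_cast hrc
    zify at hU
    zify [hm2k]
    linear_combination hU - (m:ℤ) * hd' + (m:ℤ) * hrc'
  have hEN : μ ({ω | s ≤ support A X ω} ∩ {ω | s ≤ support A Y ω})
      ≤ ∑ S₁ ∈ pcs, ∑ S₂ ∈ pcs, ENNReal.ofReal (q ^ ((2*k-m)*s + (S₂ \ S₁).card * m)) := by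
    refine (measure_mono hsub).trans ?_
    refine (measure_biUnion_finset_le pcs _).trans ?_
    refine Finset.sum_le_sum fun S₁ hS₁ => ?_
    refine (measure_biUnion_finset_le pcs _).trans ?_
    refine Finset.sum_le_sum fun S₂ hS₂ => ?_
    have := meas_inter μ A q hindep hp (S₁ ×ˢ X ∪ S₂ ×ˢ Y)
    rw [hG]
    rw [this, hcard S₁ hS₁ S₂ hS₂, ← ENNReal.ofReal_pow hq0]
  have h1 : pXY μ A s X Y
      ≤ ∑ S₁ ∈ pcs, ∑ S₂ ∈ pcs, q ^ ((2*k-m)*s + (S₂ \ S₁).card * m) := by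
    rw [pXY]
    have hne : (∑ S₁ ∈ pcs, ∑ S₂ ∈ pcs,
        ENNReal.ofReal (q ^ ((2*k-m)*s + (S₂ \ S₁).card * m))) ≠ ⊤ := by
      refine (ENNReal.sum_lt_top.2 fun S₁ _ => ?_).ne
      refine ENNReal.sum_lt_top.2 fun S₂ _ => ?_
      exact ENNReal.ofReal_lt_top
    refine (ENNReal.toReal_mono hne hEN).trans (le_of_eq ?_)
    rw [ENNReal.toReal_sum (fun S₁ _ => by
      refine (ENNReal.sum_lt_top.2 fun S₂ _ => ENNReal.ofReal_lt_top).ne)]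
    refine Finset.sum_congr rfl fun S₁ _ => ?_
    rw [ENNReal.toReal_sum (fun S₂ _ => ENNReal.ofReal_ne_top)]
    exact Finset.sum_congr rfl fun S₂ _ => ENNReal.toReal_ofReal (pow_nonneg hq0 _)
  have h2 : ∀ S₁ ∈ pcs, ∑ S₂ ∈ pcs, q ^ ((2*k-m)*s + (S₂ \ S₁).card * m)
      ≤ q^((2*k-m)*s) * (1 + (t:ℝ)*q^m)^s := by
    intro S₁ hS₁
    have he : ∀ S₂ : Finset (Fin t),
        q ^ ((2*k-m)*s + (S₂ \ S₁).card * m) = q^((2*k-m)*s) * (q^m)^(S₂ \ S₁).card := by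
      intro S₂; rw [pow_add, mul_comm ((S₂ \ S₁).card) m, pow_mul, pow_mul]
    rw [Finset.sum_congr rfl fun S₂ _ => he S₂, ← Finset.mul_sum]
    have hc := sum_pow_sdiff_le s S₁ (Finset.mem_powersetCard_univ.1 hS₁)
      (pow_nonneg hq0 m)
    rw [Fintype.card_fin] at hc
    exact mul_le_mul_of_nonneg_left hc (pow_nonneg hq0 _)
  have h3 : pXY μ A s X Y ≤ ∑ S₁ ∈ pcs, q^((2*k-m)*s) * (1 + (t:ℝ)*q^m)^s :=
    h1.trans (Finset.sum_le_sum h2)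
  rw [Finset.sum_const, Finset.card_powersetCard, Finset.card_univ, Fintype.card_fin,
    nsmul_eq_mul] at h3
  refine h3.trans ?_
  have hfac : (0:ℝ) ≤ q^((2*k-m)*s) * (1 + (t:ℝ)*q^m)^s := by positivity
  have h4 : (t.choose s : ℝ) ≤ (t:ℝ)^s := by exact_mod_cast Nat.choose_le_pow t s
  calc (t.choose s : ℝ) * (q^((2*k-m)*s) * (1 + (t:ℝ)*q^m)^s)
      ≤ (t:ℝ)^s * (q^((2*k-m)*s) * (1 + (t:ℝ)*q^m)^s) :=
        mul_le_mul_of_nonneg_right h4 hfac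
    _ = (t:ℝ)^s * q^((2*k-m)*s) * (1 + (t:ℝ)*q^m)^s := by ring

include hindep hp in
lemma lam_sum_le (hq0 : 0 ≤ q) :
    ∑ X ∈ (Finset.univ : Finset (Fin n)).powersetCard k, pX μ A s X
      ≤ (n:ℝ)^k * ((t:ℝ)^s * q^(s*k)) := by
  have h1 : ∑ X ∈ (Finset.univ : Finset (Fin n)).powersetCard k, pX μ A s X
      ≤ ∑ _X ∈ (Finset.univ : Finset (Fin n)).powersetCard k, (t:ℝ)^s * q^(s*k) :=
    Finset.sum_le_sum fun X hX =>
      mu_E_le μ A k s q hindep hp hq0 X (Finset.mem_powersetCard_univ.1 hX)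
  rw [Finset.sum_const, Finset.card_powersetCard, Finset.card_univ, Fintype.card_fin,
    nsmul_eq_mul] at h1
  refine h1.trans ?_
  have h2 : (n.choose k : ℝ) ≤ (n:ℝ)^k := by exact_mod_cast Nat.choose_le_pow n k
  have h3 : (0:ℝ) ≤ (t:ℝ)^s * q^(s*k) := by positivity
  exact mul_le_mul_of_nonneg_right h2 h3

include hindep hp in
lemma D_sum_le (hq0 : 0 ≤ q) (hq1 : q ≤ 1) :
    ∑ X ∈ (Finset.univ : Finset (Fin n)).powersetCard k,
      ∑ Y ∈ ((Finset.univ : Finset (Fin n)).powersetCard k).erase X, pXY μ A s X Y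
    ≤ (n:ℝ)^k * ∑ m' ∈ range k, (k.choose m' : ℝ) * (n:ℝ)^(k-m') *
        ((t:ℝ)^s * q^((2*k-m')*s) * (1 + (t:ℝ)*q^m')^s) := by
  classical
  set K := (Finset.univ : Finset (Fin n)).powersetCard k with hK
  set F : ℕ → ℝ := fun m' => (t:ℝ)^s * q^((2*k-m')*s) * (1 + (t:ℝ)*q^m')^s with hF
  have hFnn : ∀ m', 0 ≤ F m' := by
    intro m'; rw [hF]; positivity
  have hinner : ∀ X ∈ K, ∑ Y ∈ K.erase X, pXY μ A s X Y
      ≤ ∑ m' ∈ range k, (k.choose m' : ℝ) * (n:ℝ)^(k-m') * F m' := by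
    intro X hX
    have hXc : X.card = k := Finset.mem_powersetCard_univ.1 hX
    have hstep1 : ∑ Y ∈ K.erase X, pXY μ A s X Y ≤ ∑ Y ∈ K.erase X, F ((X ∩ Y).card) := by
      refine Finset.sum_le_sum fun Y hY => ?_
      have hYc : Y.card = k := Finset.mem_powersetCard_univ.1 (Finset.mem_of_mem_erase hY)
      exact mu_EE_le μ A k s q hindep hp hq0 hq1 X Y hXc hYc
    have hmap : ∀ Y ∈ K.erase X, (X ∩ Y).card ∈ range k := by
      intro Y hY
      rw [Finset.mem_range]
      have hYne : Y ≠ X := Finset.ne_of_mem_erase hY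
      have hYc : Y.card = k := Finset.mem_powersetCard_univ.1 (Finset.mem_of_mem_erase hY)
      have hle : (X ∩ Y).card ≤ k := by
        rw [← hXc]; exact Finset.card_le_card Finset.inter_subset_left
      rcases lt_or_eq_of_le hle with h | h
      · exact h
      · exfalso
        have h1 : X ∩ Y = X := Finset.eq_of_subset_of_card_le Finset.inter_subset_left
          (by rw [h, hXc])
        have h2 : X ⊆ Y := by rw [← h1]; exact Finset.inter_subset_right
        have h3 : X = Y := Finset.eq_of_subset_of_card_le h2 (by rw [hXc, hYc])
        exact hYne h3.symm
    refine hstep1.trans ?_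
    rw [← Finset.sum_fiberwise_of_maps_to hmap (fun Y => F ((X ∩ Y).card))]
    refine Finset.sum_le_sum fun m' hm' => ?_
    have heq : ∀ Y ∈ (K.erase X).filter (fun Y => (X ∩ Y).card = m'),
        F ((X ∩ Y).card) = F m' := by
      intro Y hY
      rw [(Finset.mem_filter.1 hY).2]
    rw [Finset.sum_congr rfl heq, Finset.sum_const, nsmul_eq_mul]
    have hcard : ((K.erase X).filter (fun Y => (X ∩ Y).card = m')).card
        ≤ k.choose m' * n^(k-m') := by
      have hinj : ((K.erase X).filter (fun Y => (X ∩ Y).card = m')).card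
          ≤ (X.powersetCard m' ×ˢ (Finset.univ : Finset (Fin n)).powersetCard (k-m')).card := by
        apply Finset.card_le_card_of_injOn (fun Y => (X ∩ Y, Y \ X))
        · intro Y hY
          rw [Finset.mem_coe, Finset.mem_filter] at hY
          have hYc : Y.card = k :=
            Finset.mem_powersetCard_univ.1 (Finset.mem_of_mem_erase hY.1)
          rw [Finset.mem_coe, Finset.mem_product, Finset.mem_powersetCard, Finset.mem_powersetCard_univ]
          have h5 := Finset.card_sdiff_add_card_inter Y X
          have h6 : (Y ∩ X).card = (X ∩ Y).card := by rw [Finset.inter_comm]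
          have h7 := hY.2
          dsimp only
          refine ⟨⟨Finset.inter_subset_left, h7⟩, by omega⟩
        · intro Y hY Y' hY' hpair
          simp only [Prod.mk.injEq] at hpair
          have h2 : Y \ X ∪ Y ∩ X = Y := Finset.sdiff_union_inter Y X
          have h2' : Y' \ X ∪ Y' ∩ X = Y' := Finset.sdiff_union_inter Y' X
          rw [← h2, ← h2', hpair.2, Finset.inter_comm Y X, Finset.inter_comm Y' X,
            hpair.1]
      rw [Finset.card_product, Finset.card_powersetCard, Finset.card_powersetCard,
        hXc, Finset.card_univ, Fintype.card_fin] at hinj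
      exact hinj.trans (Nat.mul_le_mul_left _ (Nat.choose_le_pow _ _))
    have hb : (((K.erase X).filter (fun Y => (X ∩ Y).card = m')).card : ℝ)
        ≤ (k.choose m' : ℝ) * (n:ℝ)^(k-m') := by
      have := hcard
      exact_mod_cast this
    exact mul_le_mul_of_nonneg_right hb (hFnn m')
  have h1 : ∑ X ∈ K, ∑ Y ∈ K.erase X, pXY μ A s X Y
      ≤ ∑ _X ∈ K, ∑ m' ∈ range k, (k.choose m' : ℝ) * (n:ℝ)^(k-m') * F m' :=
    Finset.sum_le_sum hinner
  rw [Finset.sum_const, Finset.card_powersetCard, Finset.card_univ, Fintype.card_fin,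
    nsmul_eq_mul] at h1
  refine h1.trans ?_
  have h2 : (n.choose k : ℝ) ≤ (n:ℝ)^k := by exact_mod_cast Nat.choose_le_pow n k
  have h3 : (0:ℝ) ≤ ∑ m' ∈ range k, (k.choose m' : ℝ) * (n:ℝ)^(k-m') * F m' :=
    Finset.sum_nonneg fun m' _ => by
      have := hFnn m'; positivity
  exact mul_le_mul_of_nonneg_right h2 h3

end Indep

lemma tt_pow_le {C₀ x c tt : ℝ} (hC₀ : 0 ≤ C₀) (hx0 : 0 < x) (htt0 : 0 ≤ tt)
    (htt : tt ≤ C₀ * x ^ c) (a : ℕ) :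
    tt ^ a ≤ C₀ ^ a * x ^ (c * a) := by
  calc tt ^ a ≤ (C₀ * x ^ c) ^ a := pow_le_pow_left₀ htt0 htt a
    _ = C₀ ^ a * (x ^ c) ^ (a : ℕ) := mul_pow _ _ _
    _ = C₀ ^ a * x ^ (c * a) := by
        rw [← Real.rpow_natCast (x ^ c) a, ← Real.rpow_mul hx0.le]

lemma q_pow_eq {γ x : ℝ} (hx0 : 0 < x) (a : ℕ) :
    (γ / x) ^ a = γ ^ a * x ^ (-(a:ℝ)) := by
  rw [div_pow, Real.rpow_neg hx0.le, Real.rpow_natCast, div_eq_mul_inv]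

lemma xpow_nat {x : ℝ} (a : ℕ) : x ^ a = x ^ ((a : ℕ) : ℝ) ∨ True := Or.inr trivial

/-- `λ`-term bound. -/
lemma lam_term_le {k s : ℕ} (hs : 1 ≤ s) {γ c C₀ x tt : ℝ}
    (hγ : 0 < γ) (hcs : c * s ≤ ((k:ℝ)-1) * ((s:ℝ)-1))
    (hC₀ : 1 ≤ C₀) (hx1 : 1 ≤ x) (htt0 : 0 ≤ tt) (htt : tt ≤ C₀ * x ^ c) :
    x ^ k * (tt ^ s * (γ / x) ^ (s * k))
      ≤ C₀ ^ s * (max γ 1) ^ (k * s) * x ^ ((1:ℝ) - s) := by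
  have hx0 : (0:ℝ) < x := lt_of_lt_of_le one_pos hx1
  have hq := q_pow_eq (γ := γ) hx0 (s * k)
  have htp := tt_pow_le (le_trans zero_le_one hC₀) hx0 htt0 htt s
  have hγG : γ ^ (s * k) ≤ (max γ 1) ^ (k * s) := by
    rw [mul_comm s k]
    exact pow_le_pow_left₀ hγ.le (le_max_left _ _) _
  have key : x ^ k * (tt ^ s * (γ / x) ^ (s * k))
      ≤ C₀ ^ s * (max γ 1) ^ (k * s) * (x ^ ((k:ℝ)) * x ^ (c * s) * x ^ (-((s*k:ℕ):ℝ))) := by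
    rw [hq]
    have h1 : x ^ k = x ^ ((k:ℝ)) := (Real.rpow_natCast x k).symm
    rw [h1]
    have h2 : (0:ℝ) ≤ x ^ ((k:ℝ)) := (Real.rpow_pos_of_pos hx0 _).le
    have h3 : (0:ℝ) ≤ γ ^ (s * k) := pow_nonneg hγ.le _
    have h4 : (0:ℝ) ≤ x ^ (-(((s*k:ℕ)):ℝ)) := (Real.rpow_pos_of_pos hx0 _).le
    calc x ^ ((k:ℝ)) * (tt ^ s * (γ ^ (s*k) * x ^ (-((s*k:ℕ):ℝ))))
        ≤ x ^ ((k:ℝ)) * ((C₀ ^ s * x ^ (c * s)) * ((max γ 1) ^ (k*s) * x ^ (-((s*k:ℕ):ℝ)))) := by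
          refine mul_le_mul_of_nonneg_left ?_ h2
          refine mul_le_mul htp (mul_le_mul_of_nonneg_right hγG h4) (by positivity) (by positivity)
      _ = C₀ ^ s * (max γ 1) ^ (k * s) * (x ^ ((k:ℝ)) * x ^ (c * s) * x ^ (-((s*k:ℕ):ℝ))) := by
          ring
  refine key.trans ?_
  have hexp : x ^ ((k:ℝ)) * x ^ (c * s) * x ^ (-((s*k:ℕ):ℝ)) ≤ x ^ ((1:ℝ) - s) := by
    rw [← Real.rpow_add hx0, ← Real.rpow_add hx0]
    apply Real.rpow_le_rpow_of_exponent_le hx1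
    have h5 : ((s*k : ℕ):ℝ) = (s:ℝ) * k := by push_cast; ring
    rw [h5]
    have hs1 : (1:ℝ) ≤ (s:ℝ) := by exact_mod_cast hs
    nlinarith
  have hcc : (0:ℝ) ≤ C₀ ^ s * (max γ 1) ^ (k * s) := by positivity
  exact mul_le_mul_of_nonneg_left hexp hcc

/-- pair-term bound. -/
lemma pair_term_le {k s m : ℕ} (hs : 1 ≤ s) (hm : m < k) {γ c C₀ x tt : ℝ}
    (hγ : 0 < γ) (hcs : c * s ≤ ((k:ℝ)-1) * ((s:ℝ)-1))
    (hC₀ : 1 ≤ C₀) (hx1 : 1 ≤ x) (hγx : γ ≤ x) (htt0 : 0 ≤ tt) (htt : tt ≤ C₀ * x ^ c) :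
    x ^ k * x ^ (k - m) * (tt ^ s * (γ / x) ^ ((2*k - m)*s) * (1 + tt * (γ / x) ^ m) ^ s)
      ≤ 2 * 2 ^ s * C₀ ^ (2*s) * (max γ 1) ^ (2*k*s) * x ^ ((2:ℝ) - 2*(s:ℝ)) := by
  have hx0 : (0:ℝ) < x := lt_of_lt_of_le one_pos hx1
  set q : ℝ := γ / x with hqdef
  have hq0 : 0 ≤ q := div_nonneg hγ.le hx0.le
  have hq1 : q ≤ 1 := div_le_one_of_le₀ hγx hx0.le
  set G : ℝ := (max γ 1) ^ (2*k*s) with hG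
  have hG1 : 1 ≤ G := one_le_pow₀ (le_max_right γ 1)
  have hγle : ∀ a : ℕ, a ≤ 2*k*s → γ ^ a ≤ G := by
    intro a ha
    calc γ ^ a ≤ (max γ 1) ^ a := pow_le_pow_left₀ hγ.le (le_max_left _ _) _
      _ ≤ G := pow_le_pow_right₀ (le_max_right γ 1) ha
  -- step 1 : (1 + tt q^m)^s ≤ 2^s (1 + (tt q^m)^s)
  have hstep1 : (1 + tt * q ^ m) ^ s ≤ 2 ^ s * (1 + (tt * q ^ m) ^ s) := by
    have ha0 : 0 ≤ tt * q ^ m := mul_nonneg htt0 (pow_nonneg hq0 m)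
    by_cases hc1 : tt * q ^ m ≤ 1
    · calc (1 + tt * q ^ m) ^ s ≤ 2 ^ s := by
            apply pow_le_pow_left₀ (by linarith) (by linarith)
        _ ≤ 2 ^ s * (1 + (tt * q ^ m) ^ s) := by
            nlinarith [pow_nonneg ha0 s, pow_pos (show (0:ℝ) < 2 by norm_num) s]
    · push_neg at hc1
      calc (1 + tt * q ^ m) ^ s ≤ (2 * (tt * q ^ m)) ^ s := by
            apply pow_le_pow_left₀ (by linarith) (by linarith)
        _ = 2 ^ s * (tt * q ^ m) ^ s := mul_pow _ _ _
        _ ≤ 2 ^ s * (1 + (tt * q ^ m) ^ s) := by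
            nlinarith [pow_nonneg ha0 s, pow_pos (show (0:ℝ) < 2 by norm_num) s]
  -- x power collection
  have hxx : x ^ k * x ^ (k - m) = x ^ (2*k - m) := by
    rw [← pow_add]; congr 1; omega
  -- A piece
  have hA : x ^ (2*k-m) * (tt ^ s * q ^ ((2*k-m)*s))
      ≤ C₀ ^ (2*s) * G * x ^ ((2:ℝ) - 2*(s:ℝ)) := by
    have htp := tt_pow_le (le_trans zero_le_one hC₀) hx0 htt0 htt s
    have hqe := q_pow_eq (γ := γ) hx0 ((2*k-m)*s)
    have hγ2 : γ ^ ((2*k-m)*s) ≤ G := hγle _ (by nlinarith [Nat.sub_le (2*k) m])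
    have hC2 : C₀ ^ s ≤ C₀ ^ (2*s) := pow_le_pow_right₀ hC₀ (by omega)
    have hkey : x ^ (2*k-m) * (tt ^ s * q ^ ((2*k-m)*s))
        ≤ C₀ ^ (2*s) * G *
          (x ^ (((2*k-m:ℕ)):ℝ) * x ^ (c * s) * x ^ (-(((2*k-m)*s:ℕ):ℝ))) := by
      rw [hqdef, hqe, ← Real.rpow_natCast x (2*k-m)]
      have h4 : (0:ℝ) ≤ x ^ (-((((2*k-m)*s:ℕ)):ℝ)) := (Real.rpow_pos_of_pos hx0 _).le
      calc x ^ (((2*k-m:ℕ)):ℝ) * (tt ^ s * (γ ^ ((2*k-m)*s) * x ^ (-(((2*k-m)*s:ℕ):ℝ))))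
          ≤ x ^ (((2*k-m:ℕ)):ℝ) *
            ((C₀ ^ (2*s) * x ^ (c * s)) * (G * x ^ (-(((2*k-m)*s:ℕ):ℝ)))) := by
            refine mul_le_mul_of_nonneg_left ?_ (Real.rpow_pos_of_pos hx0 _).le
            refine mul_le_mul (htp.trans (mul_le_mul_of_nonneg_right hC2 (Real.rpow_pos_of_pos hx0 _).le))
              (mul_le_mul_of_nonneg_right hγ2 h4) (by positivity) (by positivity)
        _ = C₀ ^ (2*s) * G * (x ^ (((2*k-m:ℕ)):ℝ) * x ^ (c * s) * x ^ (-(((2*k-m)*s:ℕ):ℝ))) := by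
            ring
    refine hkey.trans ?_
    have hexp : x ^ (((2*k-m:ℕ)):ℝ) * x ^ (c * s) * x ^ (-(((2*k-m)*s:ℕ):ℝ))
        ≤ x ^ ((2:ℝ) - 2*(s:ℝ)) := by
      rw [← Real.rpow_add hx0, ← Real.rpow_add hx0]
      apply Real.rpow_le_rpow_of_exponent_le hx1
      have e1 : (((2*k-m:ℕ)):ℝ) = 2*(k:ℝ) - m := by
        have : m ≤ 2*k := by omega
        push_cast [this]; ring
      have e2 : ((((2*k-m)*s:ℕ)):ℝ) = (2*(k:ℝ) - m) * s := by
        have : m ≤ 2*k := by omega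
        push_cast [this]; ring
      rw [e1, e2]
      have hs1 : (1:ℝ) ≤ (s:ℝ) := by exact_mod_cast hs
      have hm1 : (m:ℝ) + 1 ≤ (k:ℝ) := by exact_mod_cast hm
      nlinarith [mul_nonneg (sub_nonneg.2 hs1) (by linarith : (0:ℝ) ≤ (k:ℝ) - m - 1)]
    exact mul_le_mul_of_nonneg_left hexp (by positivity)
  -- B piece
  have hB : x ^ (2*k-m) * (tt ^ (2*s) * q ^ (2*k*s))
      ≤ C₀ ^ (2*s) * G * x ^ ((2:ℝ) - 2*(s:ℝ)) := by
    have htp := tt_pow_le (le_trans zero_le_one hC₀) hx0 htt0 htt (2*s)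
    push_cast at htp
    have hqe := q_pow_eq (γ := γ) hx0 (2*k*s)
    have hγ2 : γ ^ (2*k*s) ≤ G := hγle _ le_rfl
    have hkey : x ^ (2*k-m) * (tt ^ (2*s) * q ^ (2*k*s))
        ≤ C₀ ^ (2*s) * G *
          (x ^ (((2*k-m:ℕ)):ℝ) * x ^ (c * (2*s)) * x ^ (-((2*k*s:ℕ):ℝ))) := by
      rw [hqdef, hqe, ← Real.rpow_natCast x (2*k-m)]
      have h4 : (0:ℝ) ≤ x ^ (-(((2*k*s:ℕ)):ℝ)) := (Real.rpow_pos_of_pos hx0 _).le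
      calc x ^ (((2*k-m:ℕ)):ℝ) * (tt ^ (2*s) * (γ ^ (2*k*s) * x ^ (-((2*k*s:ℕ):ℝ))))
          ≤ x ^ (((2*k-m:ℕ)):ℝ) *
            ((C₀ ^ (2*s) * x ^ (c * (2*s))) * (G * x ^ (-((2*k*s:ℕ):ℝ)))) := by
            refine mul_le_mul_of_nonneg_left ?_ (Real.rpow_pos_of_pos hx0 _).le
            refine mul_le_mul htp (mul_le_mul_of_nonneg_right hγ2 h4) (by positivity) (by positivity)
        _ = C₀ ^ (2*s) * G * (x ^ (((2*k-m:ℕ)):ℝ) * x ^ (c * (2*s)) * x ^ (-((2*k*s:ℕ):ℝ))) := by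
            ring
    refine hkey.trans ?_
    have hexp : x ^ (((2*k-m:ℕ)):ℝ) * x ^ (c * (2*s)) * x ^ (-((2*k*s:ℕ):ℝ))
        ≤ x ^ ((2:ℝ) - 2*(s:ℝ)) := by
      rw [← Real.rpow_add hx0, ← Real.rpow_add hx0]
      apply Real.rpow_le_rpow_of_exponent_le hx1
      have e1 : (((2*k-m:ℕ)):ℝ) = 2*(k:ℝ) - m := by
        have : m ≤ 2*k := by omega
        push_cast [this]; ring
      have e2 : (((2*k*s:ℕ)):ℝ) = 2*(k:ℝ)*s := by push_cast; ring
      rw [e1, e2]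
      have hs1 : (1:ℝ) ≤ (s:ℝ) := by exact_mod_cast hs
      have hm0' : (0:ℝ) ≤ (m:ℝ) := Nat.cast_nonneg m
      nlinarith
    exact mul_le_mul_of_nonneg_left hexp (by positivity)
  -- assemble
  have hexpand : x ^ k * x ^ (k - m) * (tt ^ s * q ^ ((2*k-m)*s) * (1 + tt * q ^ m) ^ s)
      ≤ 2 ^ s * (x ^ (2*k-m) * (tt ^ s * q ^ ((2*k-m)*s))
          + x ^ (2*k-m) * (tt ^ (2*s) * q ^ (2*k*s))) := by
    rw [hxx]
    have hbase : (0:ℝ) ≤ x ^ (2*k-m) * (tt ^ s * q ^ ((2*k-m)*s)) := by positivity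
    have hmul : x ^ (2*k-m) * (tt ^ s * q ^ ((2*k-m)*s)) * (2 ^ s * (1 + (tt * q ^ m) ^ s))
        = 2 ^ s * (x ^ (2*k-m) * (tt ^ s * q ^ ((2*k-m)*s))
          + x ^ (2*k-m) * (tt ^ (2*s) * q ^ (2*k*s))) := by
      have hee : (2*k-m)*s + m*s = 2*k*s := by
        have h9 : 2*k - m + m = 2*k := by omega
        calc (2*k-m)*s + m*s = ((2*k-m) + m)*s := (add_mul _ _ _).symm
          _ = 2*k*s := by rw [h9]
      have h8 : tt ^ s * q ^ ((2*k-m)*s) * (tt * q ^ m) ^ s = tt ^ (2*s) * q ^ (2*k*s) := by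
        rw [mul_pow, ← pow_mul q m s]
        calc tt ^ s * q ^ ((2*k-m)*s) * (tt ^ s * q ^ (m*s))
            = tt ^ (s+s) * q ^ ((2*k-m)*s + m*s) := by rw [pow_add, pow_add]; ring
          _ = tt ^ (2*s) * q ^ (2*k*s) := by rw [two_mul s, hee]
      calc x ^ (2*k-m) * (tt ^ s * q ^ ((2*k-m)*s)) * (2 ^ s * (1 + (tt * q ^ m) ^ s))
          = 2 ^ s * (x ^ (2*k-m) * (tt ^ s * q ^ ((2*k-m)*s))
            + x ^ (2*k-m) * (tt ^ s * q ^ ((2*k-m)*s) * (tt * q ^ m) ^ s)) := by ring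
        _ = 2 ^ s * (x ^ (2*k-m) * (tt ^ s * q ^ ((2*k-m)*s))
            + x ^ (2*k-m) * (tt ^ (2*s) * q ^ (2*k*s))) := by rw [h8]
    calc x ^ (2*k-m) * (tt ^ s * q ^ ((2*k-m)*s) * (1 + tt * q ^ m) ^ s)
        = x ^ (2*k-m) * (tt ^ s * q ^ ((2*k-m)*s)) * (1 + tt * q ^ m) ^ s := by ring
      _ ≤ x ^ (2*k-m) * (tt ^ s * q ^ ((2*k-m)*s)) * (2 ^ s * (1 + (tt * q ^ m) ^ s)) :=
          mul_le_mul_of_nonneg_left hstep1 hbase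
      _ = _ := hmul
  refine hexpand.trans ?_
  calc 2 ^ s * (x ^ (2*k-m) * (tt ^ s * q ^ ((2*k-m)*s))
        + x ^ (2*k-m) * (tt ^ (2*s) * q ^ (2*k*s)))
      ≤ 2 ^ s * (C₀ ^ (2*s) * G * x ^ ((2:ℝ) - 2*(s:ℝ)) + C₀ ^ (2*s) * G * x ^ ((2:ℝ) - 2*(s:ℝ))) := by
        have h2s : (0:ℝ) ≤ 2 ^ s := by positivity
        exact mul_le_mul_of_nonneg_left (add_le_add hA hB) h2s
    _ = 2 * 2 ^ s * C₀ ^ (2*s) * G * x ^ ((2:ℝ) - 2*(s:ℝ)) := by ring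


/-- **Theorem `thm:poissapproxsimple`.**
Fix `k, s ≥ 2` (constants), `γ > 0` and `0 < c ≤ (k−1)(1−1/s)`. For each `n` consider the
random dataset model with common item probability `p = γ/n` and `t(n) = O(n^c)` transactions.
Let `λ_n := E[Q̂_{k,s}]` and `U_n` a Poisson random variable with mean `λ_n`. Then, as
`n → ∞`, `sup_{A ⊆ ℕ} |Pr(Q̂_{k,s} ∈ A) − Pr(U_n ∈ A)| = O(1/n^{2s−2})`. -/
theorem poisson_approx_fixed_p
    {k s : ℕ} (hk : 2 ≤ k) (hs : 2 ≤ s)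
    (γ : ℝ) (hγ : 0 < γ)
    (c : ℝ) (hc0 : 0 < c) (hc : c ≤ ((k : ℝ) - 1) * (1 - 1 / (s : ℝ)))
    {Ω : ℕ → Type*} [∀ n, MeasurableSpace (Ω n)]
    (μ : ∀ n, Measure (Ω n)) [∀ n, IsProbabilityMeasure (μ n)]
    (t : ℕ → ℕ)
    (htO : (fun n => (t n : ℝ)) =O[atTop] fun n => (n : ℝ) ^ c)
    (A : ∀ n, Fin (t n) → Fin n → Ω n → Bool)
    (hmeas : ∀ n j i, Measurable (A n j i))
    (hindep : ∀ n, iIndepFun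
      (fun p : Fin (t n) × Fin n => A n p.1 p.2) (μ n))
    (hfreq : ∀ n : ℕ, γ ≤ n → ∀ j i,
      μ n {ω | A n j i ω = true} = ENNReal.ofReal (γ / n)) :
    (fun n => ⨆ S : Set ℕ,
        |(μ n {ω | Qhat (A n) k s ω ∈ S}).toReal
          - poissonProb (∫ ω, (Qhat (A n) k s ω : ℝ) ∂(μ n)) S|)
      =O[atTop] fun n => 1 / (n : ℝ) ^ (2 * s - 2) := by
  classical
  have hs1 : 1 ≤ s := by omega
  have hsR : (1:ℝ) ≤ (s:ℝ) := by exact_mod_cast hs1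
  have hspos : (0:ℝ) < (s:ℝ) := by positivity
  have hcs : c * s ≤ ((k:ℝ)-1) * ((s:ℝ)-1) := by
    have h1 := mul_le_mul_of_nonneg_right hc hspos.le
    calc c * s ≤ ((k:ℝ)-1) * (1 - 1/(s:ℝ)) * s := h1
      _ = ((k:ℝ)-1) * ((s:ℝ)-1) := by first | (field_simp; ring) | field_simp
  obtain ⟨C, hC⟩ := isBigO_iff.mp htO
  set C₀ : ℝ := max C 1 with hC₀def
  have hC₀1 : (1:ℝ) ≤ C₀ := le_max_right _ _
  set G1 : ℝ := C₀ ^ s * (max γ 1) ^ (k*s) with hG1def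
  set PBc : ℝ := 2 * 2 ^ s * C₀ ^ (2*s) * (max γ 1) ^ (2*k*s) with hPBdef
  set K2 : ℝ := 2 ^ k * PBc with hK2def
  set Ktot : ℝ := 4 * (K2 + G1 ^ 2) with hKtotdef
  rw [isBigO_iff]
  refine ⟨Ktot, ?_⟩
  have hev1 : ∀ᶠ n : ℕ in atTop, γ ≤ (n:ℝ) :=
    (tendsto_natCast_atTop_atTop (R := ℝ)).eventually_ge_atTop γ
  have hev2 : ∀ᶠ n : ℕ in atTop, (1:ℝ) ≤ (n:ℝ) :=
    (tendsto_natCast_atTop_atTop (R := ℝ)).eventually_ge_atTop 1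
  filter_upwards [hC, hev1, hev2] with n htle hγn h1n
  have hx0 : (0:ℝ) < (n:ℝ) := lt_of_lt_of_le one_pos h1n
  have httle : ((t n : ℕ) : ℝ) ≤ C₀ * (n:ℝ) ^ c := by
    have h2 : ‖((t n : ℕ) : ℝ)‖ = ((t n : ℕ) : ℝ) := by
      rw [Real.norm_eq_abs, abs_of_nonneg (Nat.cast_nonneg _)]
    have h3 : ‖(n:ℝ) ^ c‖ = (n:ℝ) ^ c := by
      rw [Real.norm_eq_abs, abs_of_nonneg (Real.rpow_nonneg hx0.le c)]
    rw [h2, h3] at htle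
    refine htle.trans ?_
    exact mul_le_mul_of_nonneg_right (le_max_left C 1) (Real.rpow_nonneg hx0.le c)
  have htt0 : (0:ℝ) ≤ ((t n : ℕ) : ℝ) := Nat.cast_nonneg _
  have hq0 : (0:ℝ) ≤ γ / (n:ℝ) := div_nonneg hγ.le hx0.le
  have hq1 : γ / (n:ℝ) ≤ 1 := div_le_one_of_le₀ hγn hx0.le
  have hfq : ∀ j i, μ n {ω | A n j i ω = true} = ENNReal.ofReal (γ / (n:ℝ)) := hfreq n hγn
  set lam : ℝ := ∫ ω, (Qhat (A n) k s ω : ℝ) ∂(μ n) with hlamdef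
  set D : ℝ := ∑ X ∈ (Finset.univ : Finset (Fin n)).powersetCard k,
      ∑ Y ∈ ((Finset.univ : Finset (Fin n)).powersetCard k).erase X,
        pXY (μ n) (A n) s X Y with hDdef
  have hbound : ∀ S : Set ℕ,
      |(μ n {ω | Qhat (A n) k s ω ∈ S}).toReal - poissonProb lam S| ≤ 4 * (D + lam ^ 2) := by
    intro S
    exact abstract_bound (μ n) (Qhat (A n) k s)
      (measurable_Qhat (A n) k s (hmeas n))
      (integrable_Qcast (μ n) (A n) k s (hmeas n))
      (integrable_Qmul (μ n) (A n) k s (hmeas n))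
      D (moment2_eq (μ n) (A n) k s (hmeas n)) S
  have hlam0 : 0 ≤ lam := integral_nonneg fun ω => Nat.cast_nonneg _
  have hlamle : lam ≤ G1 * (n:ℝ) ^ ((1:ℝ) - (s:ℝ)) := by
    rw [hlamdef, lam_eq (μ n) (A n) k s (hmeas n)]
    refine (lam_sum_le (μ n) (A n) k s (γ / (n:ℝ)) (hindep n) hfq hq0).trans ?_
    exact lam_term_le hs1 hγ hcs hC₀1 h1n htt0 httle
  have hlamsq : lam ^ 2 ≤ G1 ^ 2 * (n:ℝ) ^ ((2:ℝ) - 2*(s:ℝ)) := by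
    have h := pow_le_pow_left₀ hlam0 hlamle 2
    refine h.trans (le_of_eq ?_)
    rw [mul_pow, sq ((n:ℝ) ^ ((1:ℝ) - (s:ℝ))), ← Real.rpow_add hx0]
    ring_nf
  have hD0 : 0 ≤ D := by
    rw [hDdef]
    refine Finset.sum_nonneg fun X _ => Finset.sum_nonneg fun Y _ => ?_
    exact ENNReal.toReal_nonneg
  have hDle : D ≤ K2 * (n:ℝ) ^ ((2:ℝ) - 2*(s:ℝ)) := by
    rw [hDdef]
    refine (D_sum_le (μ n) (A n) k s (γ / (n:ℝ)) (hindep n) hfq hq0 hq1).trans ?_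
    rw [Finset.mul_sum]
    have hPB0 : (0:ℝ) ≤ PBc * (n:ℝ) ^ ((2:ℝ) - 2*(s:ℝ)) := by
      rw [hPBdef]
      have := Real.rpow_nonneg hx0.le ((2:ℝ) - 2*(s:ℝ))
      positivity
    have hterm : ∀ m' ∈ range k,
        (n:ℝ)^k * ((k.choose m' : ℝ) * (n:ℝ)^(k-m') *
          (((t n : ℕ):ℝ)^s * (γ/(n:ℝ))^((2*k-m')*s) * (1 + ((t n : ℕ):ℝ)*(γ/(n:ℝ))^m')^s))
        ≤ (k.choose m' : ℝ) * (PBc * (n:ℝ) ^ ((2:ℝ) - 2*(s:ℝ))) := by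
      intro m' hm'
      have hmk : m' < k := Finset.mem_range.1 hm'
      have hp := pair_term_le (m := m') hs1 hmk hγ hcs hC₀1 h1n hγn htt0 httle
      have hrw : (n:ℝ)^k * ((k.choose m' : ℝ) * (n:ℝ)^(k-m') *
          (((t n : ℕ):ℝ)^s * (γ/(n:ℝ))^((2*k-m')*s) * (1 + ((t n : ℕ):ℝ)*(γ/(n:ℝ))^m')^s))
          = (k.choose m' : ℝ) * ((n:ℝ)^k * (n:ℝ)^(k-m') *
          (((t n : ℕ):ℝ)^s * (γ/(n:ℝ))^((2*k-m')*s) * (1 + ((t n : ℕ):ℝ)*(γ/(n:ℝ))^m')^s)) := by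
        ring
      rw [hrw, hPBdef]
      exact mul_le_mul_of_nonneg_left hp (Nat.cast_nonneg _)
    refine (Finset.sum_le_sum hterm).trans ?_
    rw [← Finset.sum_mul]
    have hch : ∑ m' ∈ range k, (k.choose m' : ℝ) ≤ 2 ^ k := by
      have h1 : ∑ m' ∈ range k, k.choose m' ≤ ∑ m' ∈ range (k+1), k.choose m' :=
        Finset.sum_le_sum_of_subset (Finset.range_subset_range.2 (by omega))
      rw [Nat.sum_range_choose] at h1
      calc ∑ m' ∈ range k, (k.choose m' : ℝ) = ((∑ m' ∈ range k, k.choose m' : ℕ) : ℝ) := by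
            push_cast; ring
        _ ≤ ((2^k : ℕ) : ℝ) := by exact_mod_cast h1
        _ = 2 ^ k := by push_cast; ring
    calc (∑ m' ∈ range k, (k.choose m' : ℝ)) * (PBc * (n:ℝ) ^ ((2:ℝ) - 2*(s:ℝ)))
        ≤ 2 ^ k * (PBc * (n:ℝ) ^ ((2:ℝ) - 2*(s:ℝ))) :=
          mul_le_mul_of_nonneg_right hch hPB0
      _ = K2 * (n:ℝ) ^ ((2:ℝ) - 2*(s:ℝ)) := by rw [hK2def]; ring
  -- convert rpow to the target form
  have hconv : (n:ℝ) ^ ((2:ℝ) - 2*(s:ℝ)) = 1 / (n:ℝ) ^ (2*s-2) := by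
    have h1 : ((2*s-2 : ℕ) : ℝ) = 2*(s:ℝ) - 2 := by
      have : 2 ≤ 2*s := by omega
      push_cast [this]; ring
    have h2 : (2:ℝ) - 2*(s:ℝ) = -(((2*s-2 : ℕ)):ℝ) := by rw [h1]; ring
    rw [h2, Real.rpow_neg hx0.le, Real.rpow_natCast, one_div]
  have hsup : (⨆ S : Set ℕ, |(μ n {ω | Qhat (A n) k s ω ∈ S}).toReal - poissonProb lam S|)
      ≤ 4 * (D + lam ^ 2) := ciSup_le hbound
  have hsup0 : 0 ≤ ⨆ S : Set ℕ, |(μ n {ω | Qhat (A n) k s ω ∈ S}).toReal - poissonProb lam S| :=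
    Real.iSup_nonneg fun S => abs_nonneg _
  have hfinal : 4 * (D + lam ^ 2) ≤ Ktot * (1 / (n:ℝ) ^ (2*s-2)) := by
    rw [← hconv, hKtotdef]
    nlinarith [hDle, hlamsq]
  rw [Real.norm_eq_abs, Real.norm_eq_abs, abs_of_nonneg hsup0,
    abs_of_nonneg (by positivity : (0:ℝ) ≤ 1 / (n:ℝ) ^ (2*s-2))]
  exact hsup.trans hfinal

end PaperModel
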